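/- Let X and Y be measurable spaces, s : (ℕ → Bool) → X measurable, and f : X → (ℕ → Bool) → Y with the uncurried map (x,u) ↦ f x u measurable. Then the pushforward of β under the sequenced sampler u ↦ f (s (n ↦ u(2n))) (n ↦ u(2n+1)) equals the monadic bind of the pushforwards: Measure.map (fun u => f (s (fun n => u (2*n))) (fun n => u (2*n+1))) β = (Measure.map s β).bind (fun x => Measure.map (f x) β). -/

import Mathlib

open MeasureTheory

/-- `β` is the fair-coin measure on bit-streams: the countable product of copies of the
probability measure on `Bool` giving mass `1/2` to `true` and `1/2` to `false`.
Since the infinite product of probability measures is uniquely determined by its values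
on cylinder sets, we characterize `β` by: every cylinder fixing the coordinates in a
finite set `s` has measure `(1/2) ^ s.card`. -/
def IsFairCoinMeasure (β : Measure (ℕ → Bool)) : Prop :=
  ∀ (s : Finset ℕ) (f : ℕ → Bool),
    β {u : ℕ → Bool | ∀ i ∈ s, u i = f i} = (1 / 2 : ENNReal) ^ s.card

namespace FairCoinAux

open Set

variable {ι : Type*}

/-- Generalized fair-coin property over an arbitrary index type. -/
def IsFC (μ : Measure (ι → Bool)) : Prop :=
  ∀ (s : Finset ι) (f : ι → Bool),
    μ {u : ι → Bool | ∀ i ∈ s, u i = f i} = (1 / 2 : ENNReal) ^ s.card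

lemma IsFC.isProbabilityMeasure {μ : Measure (ι → Bool)} (h : IsFC μ) :
    IsProbabilityMeasure μ := by
  constructor
  have := h ∅ (fun _ => false)
  simpa using this

lemma cylinder_singleton [DecidableEq ι] (s : Finset ι) (g : (i : s) → Bool) :
    cylinder (α := fun _ : ι => Bool) s {g} =
      {u : ι → Bool | ∀ i ∈ s, u i = if h : i ∈ s then g ⟨i, h⟩ else false} := by
  ext u
  simp only [mem_cylinder, Set.mem_singleton_iff, Set.mem_setOf_eq, funext_iff,
    Finset.restrict]
  constructor
  · intro h i hi
    simpa [hi] using h ⟨i, hi⟩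
  · intro h i
    simpa [i.2] using h i i.2

lemma IsFC.measure_cylinder_singleton [DecidableEq ι] {μ : Measure (ι → Bool)} (hμ : IsFC μ)
    (s : Finset ι) (g : (i : s) → Bool) :
    μ (cylinder (α := fun _ : ι => Bool) s {g}) = (1 / 2 : ENNReal) ^ s.card := by
  rw [cylinder_singleton]
  exact hμ s _

lemma IsFC.eq {μ ν : Measure (ι → Bool)} (hμ : IsFC μ) (hν : IsFC ν) : μ = ν := by
  have h1 := hμ.isProbabilityMeasure
  have h2 := hν.isProbabilityMeasure
  refine ext_of_generate_finite _ generateFrom_measurableCylinders.symm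
    isPiSystem_measurableCylinders ?_ (by simp)
  intro t ht
  rw [mem_measurableCylinders] at ht
  obtain ⟨s, S, -, rfl⟩ := ht
  classical
  have hS : S.Finite := Set.toFinite S
  have hdecomp : cylinder s S = ⋃ g ∈ hS.toFinset, cylinder (α := fun _ : ι => Bool) s {g} := by
    ext u
    simp only [mem_cylinder, Set.mem_iUnion, Set.Finite.mem_toFinset, Set.mem_singleton_iff,
      exists_prop]
    exact ⟨fun h => ⟨_, h, rfl⟩, fun ⟨g, hg, h⟩ => h ▸ hg⟩
  have hmeas : ∀ g : (i : s) → Bool, MeasurableSet (cylinder (α := fun _ : ι => Bool) s {g}) :=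
    fun g => MeasurableSet.cylinder s (measurableSet_singleton g)
  have hdisj : Set.PairwiseDisjoint (hS.toFinset : Set _)
      (fun g => cylinder (α := fun _ : ι => Bool) s {g}) := by
    intro g₁ _ g₂ _ hne
    refine Set.disjoint_left.2 fun u h1 h2 => hne ?_
    rw [mem_cylinder, Set.mem_singleton_iff] at h1 h2
    rw [← h1, h2]
  rw [hdecomp, measure_biUnion_finset hdisj (fun g _ => hmeas g),
    measure_biUnion_finset hdisj (fun g _ => hmeas g)]
  exact Finset.sum_congr rfl fun g _ => by
    rw [hμ.measure_cylinder_singleton, hν.measure_cylinder_singleton]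

lemma measurableSet_ptCyl (s : Finset ι) (f : ι → Bool) :
    MeasurableSet {u : ι → Bool | ∀ i ∈ s, u i = f i} := by
  have : {u : ι → Bool | ∀ i ∈ s, u i = f i} = ⋂ i ∈ s, {u : ι → Bool | u i = f i} := by
    ext u; simp
  rw [this]
  refine MeasurableSet.biInter s.countable_toSet fun i _ => ?_
  have h2 : {u : ι → Bool | u i = f i} = (fun u : ι → Bool => u i) ⁻¹' {f i} := rfl
  rw [h2]
  exact measurable_pi_apply i (measurableSet_singleton (f i))

/-- even/odd split -/
def gEO : (ℕ → Bool) → (ℕ → Bool) × (ℕ → Bool) :=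
  fun u => (fun n => u (2 * n), fun n => u (2 * n + 1))

lemma measurable_gEO : Measurable gEO :=
  Measurable.prod (measurable_pi_lambda _ fun n => measurable_pi_apply _)
    (measurable_pi_lambda _ fun n => measurable_pi_apply _)

noncomputable abbrev eEO : ((ℕ ⊕ ℕ) → Bool) ≃ᵐ (ℕ → Bool) × (ℕ → Bool) :=
  MeasurableEquiv.sumPiEquivProdPi (fun _ : ℕ ⊕ ℕ => Bool)

def enc : ℕ ⊕ ℕ → ℕ := Sum.elim (fun n => 2 * n) (fun n => 2 * n + 1)

lemma enc_inj : Function.Injective enc := by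
  rintro (a | a) (b | b) h <;> simp only [enc, Sum.elim_inl, Sum.elim_inr] at h <;>
    first
      | exact congrArg Sum.inl (by omega)
      | exact congrArg Sum.inr (by omega)
      | exact absurd h (by omega)

lemma eEO_symm_gEO (u : ℕ → Bool) (i : ℕ ⊕ ℕ) :
    eEO.symm (gEO u) i = u (enc i) := by
  cases i <;> rfl

lemma map_gEO {β : Measure (ℕ → Bool)} (hβ : IsFC β) :
    Measure.map gEO β = β.prod β := by
  classical
  have hprob : IsProbabilityMeasure β := hβ.isProbabilityMeasure
  have h1 : IsFC (Measure.map (⇑eEO.symm ∘ gEO) β) := by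
    intro t h
    rw [Measure.map_apply (eEO.symm.measurable.comp measurable_gEO) (measurableSet_ptCyl t h)]
    set h' : ℕ → Bool := fun m => if Even m then h (Sum.inl (m / 2)) else h (Sum.inr (m / 2))
      with hh'
    have h'_enc : ∀ i, h' (enc i) = h i := by
      rintro (n | n)
      · have he : Even (2 * n) := even_two_mul n
        have : 2 * n / 2 = n := by omega
        simp [hh', enc, he, this]
      · have he : ¬ Even (2 * n + 1) := by
          rw [Nat.even_iff]; omega
        have : (2 * n + 1) / 2 = n := by omega
        simp [hh', enc, he, this]
    have hset : (⇑eEO.symm ∘ gEO) ⁻¹' {w : (ℕ ⊕ ℕ) → Bool | ∀ i ∈ t, w i = h i}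
        = {u : ℕ → Bool | ∀ m ∈ t.image enc, u m = h' m} := by
      ext u
      simp only [Set.mem_preimage, Set.mem_setOf_eq, Function.comp_apply, eEO_symm_gEO,
        Finset.mem_image]
      constructor
      · rintro H m ⟨i, hi, rfl⟩
        rw [h'_enc]
        exact H i hi
      · intro H i hi
        rw [← h'_enc i]
        exact H _ ⟨i, hi, rfl⟩
    rw [hset, hβ (t.image enc) h', Finset.card_image_of_injective _ enc_inj]
  have h2 : IsFC (Measure.map (⇑eEO.symm) (β.prod β)) := by
    intro t h
    rw [Measure.map_apply eEO.symm.measurable (measurableSet_ptCyl t h)]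
    have hset : (⇑eEO.symm) ⁻¹' {w : (ℕ ⊕ ℕ) → Bool | ∀ i ∈ t, w i = h i}
        = {a : ℕ → Bool | ∀ n ∈ t.toLeft, a n = h (Sum.inl n)} ×ˢ
          {b : ℕ → Bool | ∀ n ∈ t.toRight, b n = h (Sum.inr n)} := by
      ext p
      simp only [Set.mem_preimage, Set.mem_setOf_eq, Set.mem_prod, Finset.mem_toLeft,
        Finset.mem_toRight]
      constructor
      · intro H
        exact ⟨fun n hn => H (Sum.inl n) hn, fun n hn => H (Sum.inr n) hn⟩
      · rintro ⟨H1, H2⟩ (n | n) hi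
        · exact H1 n hi
        · exact H2 n hi
    rw [hset, Measure.prod_prod, hβ t.toLeft (fun n => h (Sum.inl n)),
      hβ t.toRight (fun n => h (Sum.inr n)), ← pow_add,
      Finset.card_toLeft_add_card_toRight]
  have key : Measure.map (⇑eEO.symm) (Measure.map gEO β)
      = Measure.map (⇑eEO.symm) (β.prod β) := by
    rw [Measure.map_map eEO.symm.measurable measurable_gEO]
    exact h1.eq h2
  have := congrArg (Measure.map ⇑eEO) key
  rwa [Measure.map_map eEO.measurable eEO.symm.measurable,
    Measure.map_map eEO.measurable eEO.symm.measurable,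
    MeasurableEquiv.self_comp_symm, Measure.map_id, Measure.map_id] at this

end FairCoinAux

/-- Sequencing samplers corresponds to the monadic bind of the denoted distributions:
the pushforward of the fair-coin measure under
`u ↦ f (s (n ↦ u (2n))) (n ↦ u (2n+1))` equals
`(Measure.map s β).bind (fun x => Measure.map (f x) β)`. -/
theorem sequenced_sampler_pushforward_eq_bind
    {X Y : Type*} [MeasurableSpace X] [MeasurableSpace Y]
    (β : Measure (ℕ → Bool)) (hβ : IsFairCoinMeasure β)
    (s : (ℕ → Bool) → X) (hs : Measurable s)
    (f : X → (ℕ → Bool) → Y)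
    (hf : Measurable fun q : X × (ℕ → Bool) => f q.1 q.2) :
    Measure.map (fun u : ℕ → Bool => f (s (fun n => u (2 * n))) (fun n => u (2 * n + 1))) β
      = (Measure.map s β).bind (fun x => Measure.map (f x) β) := by
  classical
  have hβ' : FairCoinAux.IsFC β := hβ
  have hprob : IsProbabilityMeasure β := hβ'.isProbabilityMeasure
  have hmapEO : Measure.map FairCoinAux.gEO β = β.prod β := FairCoinAux.map_gEO hβ'
  have hF : Measurable fun p : (ℕ → Bool) × (ℕ → Bool) => f (s p.1) p.2 :=
    hf.comp ((hs.comp measurable_fst).prodMk measurable_snd)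
  have hLHS : (fun u : ℕ → Bool => f (s (fun n => u (2 * n))) (fun n => u (2 * n + 1)))
      = (fun p : (ℕ → Bool) × (ℕ → Bool) => f (s p.1) p.2) ∘ FairCoinAux.gEO := rfl
  rw [hLHS, ← Measure.map_map hF FairCoinAux.measurable_gEO, hmapEO]
  have hκA : ∀ {A : Set Y}, MeasurableSet A →
      Measurable fun x : X => Measure.map (f x) β A := by
    intro A hA
    have : (fun x : X => Measure.map (f x) β A)
        = fun x : X => β (Prod.mk x ⁻¹' ((fun q : X × (ℕ → Bool) => f q.1 q.2) ⁻¹' A)) := by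
      funext x
      rw [Measure.map_apply (hf.of_uncurry_left) hA]
      rfl
    rw [this]
    exact measurable_measure_prodMk_left (hf hA)
  have hκ : Measurable fun x : X => Measure.map (f x) β :=
    Measure.measurable_of_measurable_coe _ fun A hA => hκA hA
  ext A hA
  rw [Measure.bind_apply hA hκ.aemeasurable,
    lintegral_map (hκA hA) hs,
    Measure.map_apply hF hA,
    Measure.prod_apply (hF hA)]
  refine lintegral_congr fun a => ?_
  rw [Measure.map_apply (hf.of_uncurry_left) hA]
  rfl
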